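/- Let n ≥ 1 and let Q be a convex body in ℝⁿ containing the origin in its interior. Then (n·vol(Q))^{1/n} · ∫_{Sⁿ⁻¹} h_{Q°}(v) dσ(v) ≥ (n·ωₙ)^{(n+1)/n}, where Q° is the polar body of Q and h_{Q°} is its support function. Equality holds if and only if Q is a Euclidean ball centered at the origin. -/

import Mathlib

open MeasureTheory Filter Set Metric
open scoped Topology ENNReal RealInnerProductSpace Pointwise

noncomputable section

abbrev Euc (n : ℕ) := EuclideanSpace ℝ (Fin n)

/-- The polar set `Q° = {y : ⟪x,y⟫ ≤ 1 for all x ∈ Q}`. -/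
def polarSet {n : ℕ} (Q : Set (Euc n)) : Set (Euc n) :=
  {y : Euc n | ∀ x ∈ Q, ⟪x, y⟫ ≤ 1}

/-- The support function `h_K(x) = sup_{y ∈ K} ⟪x, y⟫`. -/
def suppFn {n : ℕ} (K : Set (Euc n)) (x : Euc n) : ℝ :=
  sSup ((fun y => ⟪x, y⟫) '' K)

variable {n : ℕ}

section algebra

lemma alg_step1 {S I J : ℝ} {n : ℕ} (hS : 0 < S) (hI : 0 < I)
    (h : (S⁻¹ * I) ^ (-(n:ℤ)) ≤ S⁻¹ * J) : S ^ (n+1) ≤ J * I ^ n := by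
  rw [zpow_neg, zpow_natCast, mul_pow, inv_pow, mul_inv, inv_inv] at h
  have h2 : S ^ n / I ^ n ≤ J / S := by
    rw [div_eq_mul_inv, div_eq_mul_inv, mul_comm J S⁻¹]
    exact h
  have := (div_le_div_iff₀ (pow_pos hI n) hS).1 h2
  calc S ^ (n+1) = S ^ n * S := pow_succ S n
  _ ≤ J * I ^ n := this

lemma alg_step1_strict {S I J : ℝ} {n : ℕ} (hS : 0 < S) (hI : 0 < I)
    (h : (S⁻¹ * I) ^ (-(n:ℤ)) < S⁻¹ * J) : S ^ (n+1) < J * I ^ n := by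
  rw [zpow_neg, zpow_natCast, mul_pow, inv_pow, mul_inv, inv_inv] at h
  have h2 : S ^ n / I ^ n < J / S := by
    rw [div_eq_mul_inv, div_eq_mul_inv, mul_comm J S⁻¹]
    exact h
  have := (div_lt_div_iff₀ (pow_pos hI n) hS).1 h2
  calc S ^ (n+1) = S ^ n * S := pow_succ S n
  _ < J * I ^ n := this

lemma alg_step2 {S I J : ℝ} {n : ℕ} (hn : 1 ≤ n) (hS : 0 < S) (hI : 0 < I) (hJ : 0 < J)
    (h : S ^ (n+1) ≤ J * I ^ n) : S ^ (((n:ℝ)+1)/n) ≤ J ^ ((1:ℝ)/n) * I := by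
  have hn0 : (n:ℝ) ≠ 0 := by positivity
  have e1 : S ^ (((n:ℝ)+1)/n) = ((S ^ (n+1) : ℝ)) ^ ((1:ℝ)/n) := by
    rw [← Real.rpow_natCast S (n+1), ← Real.rpow_mul hS.le]
    push_cast
    ring_nf
  have e2 : (J * I ^ n) ^ ((1:ℝ)/n) = J ^ ((1:ℝ)/n) * I := by
    rw [Real.mul_rpow hJ.le (pow_nonneg hI.le n), ← Real.rpow_natCast I n,
      ← Real.rpow_mul hI.le, mul_one_div, div_self hn0, Real.rpow_one]
  rw [e1, ← e2]
  exact Real.rpow_le_rpow (by positivity) h (by positivity)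

lemma alg_step2_strict {S I J : ℝ} {n : ℕ} (hn : 1 ≤ n) (hS : 0 < S) (hI : 0 < I) (hJ : 0 < J)
    (h : S ^ (n+1) < J * I ^ n) : S ^ (((n:ℝ)+1)/n) < J ^ ((1:ℝ)/n) * I := by
  have hn0 : (n:ℝ) ≠ 0 := by positivity
  have e1 : S ^ (((n:ℝ)+1)/n) = ((S ^ (n+1) : ℝ)) ^ ((1:ℝ)/n) := by
    rw [← Real.rpow_natCast S (n+1), ← Real.rpow_mul hS.le]
    push_cast
    ring_nf
  have e2 : (J * I ^ n) ^ ((1:ℝ)/n) = J ^ ((1:ℝ)/n) * I := by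
    rw [Real.mul_rpow hJ.le (pow_nonneg hI.le n), ← Real.rpow_natCast I n,
      ← Real.rpow_mul hI.le, mul_one_div, div_self hn0, Real.rpow_one]
  rw [e1, ← e2]
  exact Real.rpow_lt_rpow (by positivity) h (by positivity)

lemma alg_eq_ball {S r : ℝ} {n : ℕ} (hn : 1 ≤ n) (hS : 0 < S) (hr : 0 < r) :
    (r ^ n * S) ^ ((1:ℝ)/n) * (S * (1/r)) = S ^ (((n:ℝ)+1)/n) := by
  have hn0 : (n:ℝ) ≠ 0 := by positivity
  have e3 : (r ^ n * S) ^ ((1:ℝ)/n) = r * S ^ ((1:ℝ)/n) := by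
    rw [Real.mul_rpow (pow_nonneg hr.le n) hS.le, ← Real.rpow_natCast r n,
      ← Real.rpow_mul hr.le, mul_one_div, div_self hn0, Real.rpow_one]
  rw [e3]
  have : r * S ^ ((1:ℝ)/n) * (S * (1/r)) = S ^ ((1:ℝ)/n) * S := by
    field_simp
  rw [this]
  calc S ^ ((1:ℝ)/n) * S = S ^ ((1:ℝ)/n) * S ^ (1:ℝ) := by rw [Real.rpow_one]
  _ = S ^ ((1:ℝ)/n + 1) := (Real.rpow_add hS _ _).symm
  _ = S ^ (((n:ℝ)+1)/n) := by congr 1; field_simp; ring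

end algebra


lemma toSphere_pos_of_isOpen {U : Set (sphere (0 : Euc n) 1)} (hU : IsOpen U)
    (hne : U.Nonempty) : 0 < (volume : Measure (Euc n)).toSphere U := by
  have hdim : Module.finrank ℝ (Euc n) = n := finrank_euclideanSpace_fin
  have hnpos : 0 < n := by
    rcases hne with ⟨v, -⟩
    by_contra h
    push_neg at h
    interval_cases n
    · have h1 := mem_sphere_zero_iff_norm.1 v.2
      have h0 : (v : Euc 0) = 0 := Subsingleton.elim _ _
      rw [h0, norm_zero] at h1
      exact one_ne_zero h1.symm
  rw [Measure.toSphere_apply' _ (hU.measurableSet)]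
  set W : Set (Euc n) := Subtype.val ''
    ((homeomorphUnitSphereProd (Euc n)) ⁻¹' (U ×ˢ (Iio ⟨1, mem_Ioi.2 one_pos⟩))) with hW
  have hWvol : volume W = volume (Ioo (0:ℝ) 1 • (Subtype.val '' U)) :=
    Measure.toSphere_apply_aux volume U ⟨1, mem_Ioi.2 one_pos⟩
  have hWopen : IsOpen W := by
    refine (isOpen_compl_singleton).isOpenMap_subtype_val _ ?_
    refine (homeomorphUnitSphereProd (Euc n)).continuous.isOpen_preimage _ ?_
    exact hU.prod (isOpen_induced isOpen_Iio)
  have hWne : W.Nonempty := by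
    obtain ⟨v, hv⟩ := hne
    refine ⟨((homeomorphUnitSphereProd (Euc n)).symm (v, ⟨(1:ℝ)/2, by norm_num⟩) : Euc n),
      ⟨_, ?_, rfl⟩⟩
    rw [mem_preimage, Homeomorph.apply_symm_apply]
    exact ⟨hv, by norm_num [Subtype.ext_iff]⟩
  have : 0 < volume W := hWopen.measure_pos volume hWne
  rw [hWvol] at this
  rw [hdim]
  exact ENNReal.mul_pos (by exact_mod_cast Nat.cast_ne_zero.2 hnpos.ne') this.ne'

lemma eq_const_of_toSphere_ae_eq {h : sphere (0 : Euc n) 1 → ℝ} (hc : Continuous h)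
    {c : ℝ} (hae : h =ᵐ[(volume : Measure (Euc n)).toSphere] fun _ => c)
    (v : sphere (0 : Euc n) 1) : h v = c := by
  by_contra hv
  set U : Set (sphere (0 : Euc n) 1) := h ⁻¹' {c}ᶜ with hU
  have hUopen : IsOpen U := hc.isOpen_preimage _ (isOpen_compl_singleton)
  have hUne : U.Nonempty := ⟨v, hv⟩
  have hpos := toSphere_pos_of_isOpen hUopen hUne
  have : (volume : Measure (Euc n)).toSphere U = 0 := by
    have := hae
    rw [Filter.EventuallyEq, ae_iff] at this
    convert this using 2
    rfl
  exact absurd this hpos.ne'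

section convexbody

variable {Q : Set (Euc n)} (hQcpt : IsCompact Q) (hQconv : Convex ℝ Q)
  (hQ0 : (0 : Euc n) ∈ interior Q)

include hQ0 in
lemma abs_Q : Absorbent ℝ Q := absorbent_nhds_zero (mem_interior_iff_mem_nhds.1 hQ0)

include hQcpt hQconv hQ0 in
lemma suppFn_polarSet_eq_gauge (x : Euc n) : suppFn (polarSet Q) x = gauge Q x := by
  have habs := abs_Q hQ0
  have h0Q : (0 : Euc n) ∈ Q := interior_subset hQ0
  have h0P : (0 : Euc n) ∈ polarSet Q := fun z _ => by simp
  have hmem0 : (0 : ℝ) ∈ (fun y => ⟪x, y⟫) '' polarSet Q := ⟨0, h0P, by simp⟩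
  have hub : ∀ a ∈ (fun y => ⟪x, y⟫) '' polarSet Q, a ≤ gauge Q x := by
    rintro a ⟨y, hy, rfl⟩
    by_contra hlt
    push_neg at hlt
    obtain ⟨b, hb0, hba, hxb⟩ := exists_lt_of_gauge_lt habs hlt
    obtain ⟨z, hz, rfl⟩ := hxb
    have h1 : ⟪z, y⟫ ≤ 1 := hy z hz
    have h2 : ⟪b • z, y⟫ = b * ⟪z, y⟫ := real_inner_smul_left _ _ _
    nlinarith
  have hbdd : BddAbove ((fun y => ⟪x, y⟫) '' polarSet Q) := ⟨gauge Q x, hub⟩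
  refine le_antisymm (csSup_le ⟨0, hmem0⟩ hub) ?_
  by_contra hc
  push_neg at hc
  obtain ⟨t, ht1, ht2⟩ := exists_between hc
  have ht0 : 0 < t := lt_of_le_of_lt (le_csSup hbdd hmem0) ht1
  have hxnot : x ∉ t • Q := fun hmem => absurd (gauge_le_of_mem ht0.le hmem) (not_le.2 ht2)
  have hsconv : Convex ℝ (t • Q) := hQconv.smul t
  have hscl : IsClosed (t • Q) := (hQcpt.smul t).isClosed
  obtain ⟨f, u, hfu, hux⟩ := geometric_hahn_banach_closed_point hsconv hscl hxnot
  have hu0 : 0 < u := by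
    have := hfu 0 ⟨0, h0Q, smul_zero t⟩
    simpa using this
  set y0 := (InnerProductSpace.toDual ℝ (Euc n)).symm f with hy0def
  have hy0 : ∀ z : Euc n, ⟪y0, z⟫ = f z := fun z => InnerProductSpace.toDual_symm_apply
  set y := (t / u) • y0 with hydef
  have htu : 0 < t / u := div_pos ht0 hu0
  have hyQ : y ∈ polarSet Q := by
    intro z hz
    have h1 : f (t • z) < u := hfu _ ⟨z, hz, rfl⟩
    have h2 : f (t • z) = t * f z := by rw [_root_.map_smul, smul_eq_mul]
    have h3 : ⟪z, y⟫ = (t / u) * f z := by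
      rw [hydef, real_inner_smul_right, real_inner_comm, hy0]
    rw [h3]
    rw [h2] at h1
    calc (t / u) * f z = (t * f z) / u := by ring
    _ ≤ u / u := by gcongr
    _ = 1 := div_self hu0.ne'
  have hle : ⟪x, y⟫ ≤ sSup ((fun y => ⟪x, y⟫) '' polarSet Q) := le_csSup hbdd ⟨y, hyQ, rfl⟩
  have hgt : t < ⟪x, y⟫ := by
    have h3 : ⟪x, y⟫ = (t / u) * f x := by
      rw [hydef, real_inner_smul_right, real_inner_comm, hy0]
    rw [h3]
    calc t = (t / u) * u := by field_simp
    _ < (t / u) * f x := by exact mul_lt_mul_of_pos_left hux htu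
  exact absurd (hgt.trans_le hle) (not_lt.2 ht1.le)


include hQcpt hQ0 in
lemma gauge_lower : ∃ R : ℝ, 0 < R ∧ ∀ x : Euc n, ‖x‖ / R ≤ gauge Q x := by
  obtain ⟨R, hR⟩ := hQcpt.isBounded.subset_closedBall 0
  refine ⟨max R 1, lt_of_lt_of_le one_pos (le_max_right _ _), fun x => ?_⟩
  have h1 : Q ⊆ closedBall 0 (max R 1) :=
    hR.trans (closedBall_subset_closedBall (le_max_left _ _))
  have := gauge_mono (abs_Q hQ0) h1 x
  rwa [gauge_closedBall (by positivity)] at this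

include hQ0 in
lemma gauge_upper : ∃ δ : ℝ, 0 < δ ∧ ∀ x : Euc n, gauge Q x ≤ ‖x‖ / δ := by
  obtain ⟨δ, hδ, hsub⟩ := Metric.mem_nhds_iff.1 (mem_interior_iff_mem_nhds.1 hQ0)
  refine ⟨δ, hδ, fun x => ?_⟩
  have := gauge_mono (absorbent_ball_zero hδ) hsub x
  rwa [gauge_ball hδ.le] at this

include hQcpt hQconv hQ0 in
lemma mem_Q_iff_gauge_le_one {x : Euc n} : x ∈ Q ↔ gauge Q x ≤ 1 := by
  refine ⟨gauge_le_one_of_mem, fun h => ?_⟩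
  have := (gauge_le_one_iff_mem_closure hQconv (mem_interior_iff_mem_nhds.1 hQ0)).1 h
  rwa [hQcpt.isClosed.closure_eq] at this

lemma lint_pow (m : ℕ) {a : ℝ} (ha : 0 ≤ a) :
    ∫⁻ r in Ioc (0:ℝ) a, ENNReal.ofReal (r ^ m) = ENNReal.ofReal (a ^ (m+1) / (m+1)) := by
  rw [← ofReal_integral_eq_lintegral_ofReal (intervalIntegral.intervalIntegrable_pow m).1 ?_]
  · rw [← intervalIntegral.integral_of_le ha, integral_pow]
    norm_num
  · filter_upwards [ae_restrict_mem measurableSet_Ioc] with y hy using pow_nonneg hy.1.le _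

include hQcpt hQconv hQ0 in
lemma vol_as_lintegral (hn : 1 ≤ n) :
    ∫⁻ v : sphere (0 : Euc n) 1,
        ENNReal.ofReal (((gauge Q (v : Euc n))⁻¹) ^ n / (n : ℝ))
        ∂((volume : Measure (Euc n)).toSphere) = volume Q := by
  obtain ⟨m, rfl⟩ : ∃ m, n = m + 1 := ⟨n - 1, (Nat.succ_pred_eq_of_pos hn).symm⟩
  clear hn
  set μ : Measure (Euc (m+1)) := (volume : Measure (Euc (m+1))) with hμ
  have hQm : MeasurableSet Q := hQcpt.isClosed.measurableSet
  have hdim : Module.finrank ℝ (Euc (m+1)) = m + 1 := finrank_euclideanSpace_fin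
  have hmp := μ.measurePreserving_homeomorphUnitSphereProd
  rw [hdim, Nat.add_sub_cancel] at hmp
  obtain ⟨R, hR, hRl⟩ := gauge_lower hQcpt hQ0
  have hgpos : ∀ v : sphere (0 : Euc (m+1)) 1, 0 < gauge Q (v : Euc (m+1)) := by
    intro v
    have := hRl (v : Euc (m+1))
    have hv : ‖(v : Euc (m+1))‖ = 1 := mem_sphere_zero_iff_norm.1 v.2
    rw [hv] at this
    exact lt_of_lt_of_le (by positivity) this
  set G : sphere (0 : Euc (m+1)) 1 × Ioi (0:ℝ) → ℝ≥0∞ :=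
    fun p => Q.indicator 1 ((p.2 : ℝ) • (p.1 : Euc (m+1))) with hG
  have hGmeas : Measurable G := by
    have hc : Continuous fun p : sphere (0 : Euc (m+1)) 1 × Ioi (0:ℝ) => (p.2 : ℝ) • (p.1 : Euc (m+1)) := by
      fun_prop
    exact (measurable_one.indicator hQm).comp hc.measurable
  have key := hmp.lintegral_comp hGmeas
  -- LHS of key equals μ Q
  have hL : (∫⁻ x : ({0}ᶜ : Set (Euc (m+1))), G (homeomorphUnitSphereProd (Euc (m+1)) x) ∂(μ.comap (↑))) = μ Q := by
    have hGx : ∀ x : ({0}ᶜ : Set (Euc (m+1))), G (homeomorphUnitSphereProd (Euc (m+1)) x) =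
        Q.indicator 1 (x : Euc (m+1)) := by
      intro x
      have hx0 : (x : Euc (m+1)) ≠ 0 := x.2
      simp only [hG, homeomorphUnitSphereProd_apply_fst_coe,
        homeomorphUnitSphereProd_apply_snd_coe, smul_inv_smul₀ (norm_ne_zero_iff.2 hx0)]
    rw [lintegral_congr hGx, lintegral_subtype_comap (measurableSet_singleton 0).compl,
      ← lintegral_indicator (measurableSet_singleton 0).compl, ]
    · have : ({0}ᶜ : Set (Euc (m+1))).indicator (Q.indicator (1 : Euc (m+1) → ℝ≥0∞)) = (Q \ {0}).indicator (1 : Euc (m+1) → ℝ≥0∞) := by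
        ext z
        by_cases hz : z ∈ Q <;> by_cases hz0 : z = (0:Euc (m+1)) <;>
          simp [Set.indicator_apply, hz, hz0]
      rw [this, lintegral_indicator_one (hQm.diff (measurableSet_singleton 0)),
        measure_diff_null (measure_singleton 0)]
  rw [hL] at key
  rw [key]
  rw [lintegral_prod _ hGmeas.aemeasurable]
  refine lintegral_congr fun v => Eq.symm ?_
  -- inner integral
  have hg := hgpos v
  set a : ℝ := (gauge Q (v : Euc (m+1)))⁻¹ with ha
  have ha0 : 0 < a := inv_pos.2 hg
  have hind : ∀ r : ℝ, 0 < r →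
      Q.indicator 1 (r • (v : Euc (m+1))) = (Ioc (0:ℝ) a).indicator (1 : ℝ → ℝ≥0∞) r := by
    intro r hr
    have hmem : r • (v : Euc (m+1)) ∈ Q ↔ r ∈ Ioc (0:ℝ) a := by
      have hiff : r * gauge Q (v : Euc (m+1)) ≤ 1 ↔ r ≤ a := by
        rw [ha, ← one_div, le_div_iff₀ hg]
      rw [mem_Q_iff_gauge_le_one hQcpt hQconv hQ0,
        gauge_smul_of_nonneg hr.le, smul_eq_mul, hiff, mem_Ioc, iff_and_self]
      exact fun _ => hr
    by_cases h : r • (v : Euc (m+1)) ∈ Q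
    · rw [Set.indicator_of_mem h, Set.indicator_of_mem (hmem.1 h)]
      simp
    · rw [Set.indicator_of_notMem h, Set.indicator_of_notMem (fun hc => h (hmem.2 hc))]
  calc ∫⁻ r : Ioi (0:ℝ), G (v, r) ∂(Measure.volumeIoiPow m)
      = ∫⁻ r : Ioi (0:ℝ),
          (fun s : ℝ => ENNReal.ofReal (s ^ m) * Q.indicator 1 (s • (v : Euc (m+1)))) r
          ∂(Measure.comap Subtype.val volume) := by
        rw [Measure.volumeIoiPow, lintegral_withDensity_eq_lintegral_mul _ ?_ ?_]
        · rfl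
        · exact (measurable_subtype_coe.pow_const m).ennreal_ofReal
        · have hc : Continuous fun r : Ioi (0:ℝ) => (r : ℝ) • (v : Euc (m+1)) := by fun_prop
          exact (measurable_one.indicator hQm).comp hc.measurable
    _ = ∫⁻ r in Ioi (0:ℝ), ENNReal.ofReal (r ^ m) * Q.indicator 1 (r • (v : Euc (m+1))) ∂volume :=
        lintegral_subtype_comap measurableSet_Ioi
          (fun s : ℝ => ENNReal.ofReal (s ^ m) * Q.indicator 1 (s • (v : Euc (m+1))))
    _ = ∫⁻ r in Ioi (0:ℝ), (Ioc (0:ℝ) a).indicator (fun s => ENNReal.ofReal (s ^ m)) r ∂volume := by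
        refine setLIntegral_congr_fun measurableSet_Ioi (fun r hr => ?_)
        rw [hind r hr]
        by_cases h : r ∈ Ioc (0:ℝ) a <;> simp [Set.indicator_apply, h]
    _ = ∫⁻ r in Ioc (0:ℝ) a, ENNReal.ofReal (r ^ m) ∂volume := by
        rw [← lintegral_indicator measurableSet_Ioi, ← lintegral_indicator measurableSet_Ioc]
        refine lintegral_congr fun r => ?_
        by_cases h : r ∈ Ioc (0:ℝ) a
        · have h2 : r ∈ Ioi (0:ℝ) := h.1
          simp [Set.indicator_apply, h, h2]
        · by_cases h2 : r ∈ Ioi (0:ℝ) <;> simp [Set.indicator_apply, h, h2]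
    _ = ENNReal.ofReal (a ^ (m + 1) / (m + 1)) := lint_pow m ha0.le
    _ = ENNReal.ofReal (((gauge Q (v : Euc (m+1)))⁻¹) ^ (m+1) / ((m+1 : ℕ) : ℝ)) := by
        push_cast
        rfl



lemma ball_case (hn : 1 ≤ n) {r : ℝ} (hr : 0 < r) :
    ((n : ℝ) * (volume (closedBall (0 : Euc n) r)).toReal) ^ ((1 : ℝ) / (n : ℝ))
        * ∫ v : sphere (0 : Euc n) 1, suppFn (polarSet (closedBall (0 : Euc n) r)) (v : Euc n)
            ∂((volume : Measure (Euc n)).toSphere)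
      = ((n : ℝ) * (volume (closedBall (0 : Euc n) 1)).toReal) ^ (((n : ℝ) + 1) / (n : ℝ)) := by
  have hdim : Module.finrank ℝ (Euc n) = n := finrank_euclideanSpace_fin
  have hQcpt : IsCompact (closedBall (0 : Euc n) r) := isCompact_closedBall _ _
  have hQconv : Convex ℝ (closedBall (0 : Euc n) r) := convex_closedBall _ _
  have hQ0 : (0 : Euc n) ∈ interior (closedBall (0 : Euc n) r) :=
    mem_interior.2 ⟨ball 0 r, ball_subset_closedBall, isOpen_ball, mem_ball_self hr⟩
  set σm : Measure (sphere (0 : Euc n) 1) := (volume : Measure (Euc n)).toSphere with hσm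
  set b : ℝ := (volume (ball (0 : Euc n) 1)).toReal with hb
  have hbpos : 0 < b :=
    ENNReal.toReal_pos (measure_ball_pos volume 0 one_pos).ne' measure_ball_lt_top.ne
  have hnR : (0:ℝ) < n := by exact_mod_cast hn
  have hS : (σm univ).toReal = n * b := by
    rw [hσm, Measure.toSphere_apply_univ, hdim, ENNReal.toReal_mul, ENNReal.toReal_natCast]
  have hber : ((volume : Measure (Euc n)) (closedBall (0 : Euc n) 1)).toReal = b := by
    rw [hb]
    congr 1
    exact Measure.addHaar_unitClosedBall_eq_addHaar_unitBall volume
  have hint : (∫ v : sphere (0 : Euc n) 1, suppFn (polarSet (closedBall (0 : Euc n) r))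
      (v : Euc n) ∂σm) = ((n:ℝ) * b) * (1/r) := by
    have h1 : ∀ v : sphere (0 : Euc n) 1,
        suppFn (polarSet (closedBall (0 : Euc n) r)) (v : Euc n) = 1/r := by
      intro v
      rw [suppFn_polarSet_eq_gauge hQcpt hQconv hQ0, gauge_closedBall hr.le,
        mem_sphere_zero_iff_norm.1 v.2]
    rw [integral_congr_ae (ae_of_all _ h1), integral_const, smul_eq_mul, measureReal_def, hS]
  have hvol : ((volume : Measure (Euc n)) (closedBall (0 : Euc n) r)).toReal = r ^ n * b := by
    rw [Measure.addHaar_closedBall volume 0 hr.le, hdim, ENNReal.toReal_mul,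
      ENNReal.toReal_ofReal (by positivity)]
  rw [hint, hvol, hber]
  have h2 : (n:ℝ) * (r ^ n * b) = r ^ n * ((n:ℝ) * b) := by ring
  rw [h2]
  exact alg_eq_ball hn (by positivity) hr

/-- `σ` is the surface-area measure of the unit sphere, normalized so that
`σ(Sⁿ⁻¹) = n ωₙ`; here it is realized as `volume.toSphere`. -/
theorem stmt12 {n : ℕ} (hn : 1 ≤ n) (Q : Set (Euc n))
    (hQcpt : IsCompact Q) (hQconv : Convex ℝ Q) (hQ0 : (0 : Euc n) ∈ interior Q) :
    ((n : ℝ) * (volume (closedBall (0 : Euc n) 1)).toReal) ^ (((n : ℝ) + 1) / (n : ℝ))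
        ≤ ((n : ℝ) * (volume Q).toReal) ^ ((1 : ℝ) / (n : ℝ))
          * ∫ v : sphere (0 : Euc n) 1, suppFn (polarSet Q) (v : Euc n)
              ∂((volume : Measure (Euc n)).toSphere) ∧
      (((n : ℝ) * (volume Q).toReal) ^ ((1 : ℝ) / (n : ℝ))
            * ∫ v : sphere (0 : Euc n) 1, suppFn (polarSet Q) (v : Euc n)
                ∂((volume : Measure (Euc n)).toSphere)
          = ((n : ℝ) * (volume (closedBall (0 : Euc n) 1)).toReal) ^ (((n : ℝ) + 1) / (n : ℝ))
        ↔ ∃ r : ℝ, 0 < r ∧ Q = closedBall (0 : Euc n) r) := by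
  classical
  have hdim : Module.finrank ℝ (Euc n) = n := finrank_euclideanSpace_fin
  have hnR : (0:ℝ) < n := by exact_mod_cast hn
  have hsupp' : (fun v : sphere (0 : Euc n) 1 => suppFn (polarSet Q) (v : Euc n))
      = fun v : sphere (0 : Euc n) 1 => gauge Q (v : Euc n) :=
    funext fun v => suppFn_polarSet_eq_gauge hQcpt hQconv hQ0 _
  rw [hsupp']
  set σm : Measure (sphere (0 : Euc n) 1) := (volume : Measure (Euc n)).toSphere with hσm
  -- constants
  obtain ⟨R, hR, hRl⟩ := gauge_lower hQcpt hQ0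
  obtain ⟨δ, hδ, hδsub⟩ := Metric.mem_nhds_iff.1 (mem_interior_iff_mem_nhds.1 hQ0)
  have hδu : ∀ x : Euc n, gauge Q x ≤ ‖x‖ / δ := by
    intro x
    have := gauge_mono (absorbent_ball_zero hδ) hδsub x
    rwa [gauge_ball hδ.le] at this
  set c₁ : ℝ := 1 / R with hc₁def
  set c₂ : ℝ := 1 / δ with hc₂def
  have hc₁ : 0 < c₁ := by positivity
  have hc₂ : 0 < c₂ := by positivity
  set f : sphere (0 : Euc n) 1 → ℝ := fun v => gauge Q (v : Euc n) with hf
  have hnorm : ∀ v : sphere (0 : Euc n) 1, ‖(v : Euc n)‖ = 1 :=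
    fun v => mem_sphere_zero_iff_norm.1 v.2
  have hfc : Continuous f :=
    (continuous_gauge hQconv (mem_interior_iff_mem_nhds.1 hQ0)).comp continuous_subtype_val
  have hfmem : ∀ v, f v ∈ Icc c₁ c₂ := by
    intro v
    constructor
    · have := hRl (v : Euc n); rwa [hnorm v] at this
    · have := hδu (v : Euc n); rwa [hnorm v] at this
  have hfpos : ∀ v, 0 < f v := fun v => lt_of_lt_of_le hc₁ (hfmem v).1
  -- measure constants
  set b : ℝ := (volume (ball (0 : Euc n) 1)).toReal with hb
  have hbpos : 0 < b :=
    ENNReal.toReal_pos (measure_ball_pos volume 0 one_pos).ne' measure_ball_lt_top.ne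
  have hS : (σm univ).toReal = n * b := by
    rw [hσm, Measure.toSphere_apply_univ, hdim, ENNReal.toReal_mul, ENNReal.toReal_natCast]
  have hSpos : (0:ℝ) < n * b := by positivity
  have hber : ((volume : Measure (Euc n)) (closedBall (0 : Euc n) 1)).toReal = b := by
    rw [hb]
    congr 1
    exact Measure.addHaar_unitClosedBall_eq_addHaar_unitBall volume
  haveI : NeZero σm := by
    refine ⟨fun h0 => ?_⟩
    rw [h0] at hS
    simp only [Measure.coe_zero, Pi.zero_apply, ENNReal.toReal_zero] at hS
    nlinarith
  -- volume identity
  have hQvolpos : 0 < (volume Q).toReal :=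
    ENNReal.toReal_pos ((measure_ball_pos volume 0 hδ).trans_le (measure_mono hδsub)).ne'
      hQcpt.measure_lt_top.ne
  have hvol : (∫ v, ((gauge Q (v : Euc n))⁻¹) ^ n / (n:ℝ) ∂σm) = (volume Q).toReal := by
    have hcont : Continuous fun v : sphere (0 : Euc n) 1 => ((gauge Q (v : Euc n))⁻¹) ^ n / (n:ℝ) :=
      (((hfc.inv₀ fun v => (hfpos v).ne').pow n).div_const _)
    rw [integral_eq_lintegral_of_nonneg_ae (ae_of_all _ fun v => by
        have h0 := hfpos v
        have h0' : (0:ℝ) < gauge Q (v : Euc n) := h0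
        positivity)
      hcont.aestronglyMeasurable]
    rw [vol_as_lintegral hQcpt hQconv hQ0 hn]
  have hJint : (∫ v, (f v) ^ (-(n:ℤ)) ∂σm) = (n:ℝ) * (volume Q).toReal := by
    have h1 : ∀ v : sphere (0 : Euc n) 1,
        (f v) ^ (-(n:ℤ)) = (n:ℝ) * (((gauge Q (v : Euc n))⁻¹) ^ n / (n:ℝ)) := by
      intro v
      simp only [hf]
      rw [zpow_neg, zpow_natCast, ← inv_pow]
      have h0 : (0:ℝ) < gauge Q (v : Euc n) := hfpos v
      field_simp
    rw [integral_congr_ae (ae_of_all _ h1), integral_const_mul, hvol]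
  have hJpos : (0:ℝ) < n * (volume Q).toReal := by positivity
  -- integrability
  have hf_int : Integrable f σm := by
    refine ⟨hfc.aestronglyMeasurable, HasFiniteIntegral.of_bounded (C := c₂)
      (ae_of_all _ fun v => ?_)⟩
    rw [Real.norm_eq_abs, abs_of_pos (hfpos v)]
    exact (hfmem v).2
  have hgf_cont : Continuous fun v => (f v) ^ (-(n:ℤ)) :=
    hfc.zpow₀ _ fun v => Or.inl (hfpos v).ne'
  have hgf_int : Integrable (fun v => (f v) ^ (-(n:ℤ))) σm := by
    refine ⟨hgf_cont.aestronglyMeasurable, HasFiniteIntegral.of_bounded (C := c₁ ^ (-(n:ℤ)))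
      (ae_of_all _ fun v => ?_)⟩
    rw [Real.norm_eq_abs, abs_of_pos (zpow_pos (hfpos v) _), zpow_neg, zpow_neg,
      zpow_natCast, zpow_natCast]
    exact inv_anti₀ (pow_pos hc₁ n) (pow_le_pow_left₀ hc₁.le (hfmem v).1 n)
  -- convexity
  have hconv : StrictConvexOn ℝ (Icc c₁ c₂) (fun t : ℝ => t ^ (-(n:ℤ))) := by
    refine (strictConvexOn_zpow ?_ ?_).subset (fun t ht => lt_of_lt_of_le hc₁ ht.1) (convex_Icc _ _)
    · omega
    · omega
  have hcontOn : ContinuousOn (fun t : ℝ => t ^ (-(n:ℤ))) (Icc c₁ c₂) :=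
    ContinuousOn.zpow₀ continuousOn_id _
      fun t ht => Or.inl (ne_of_gt (lt_of_lt_of_le hc₁ ht.1))
  have hfs : ∀ᵐ v ∂σm, f v ∈ Icc c₁ c₂ := ae_of_all _ hfmem
  -- averages
  set I : ℝ := ∫ v, f v ∂σm with hI
  have hIpos : 0 < I := by
    have h1 : (∫ _v : sphere (0 : Euc n) 1, c₁ ∂σm) ≤ I :=
      integral_mono (integrable_const c₁) hf_int fun v => (hfmem v).1
    rw [integral_const, smul_eq_mul, measureReal_def, hS] at h1
    nlinarith
  -- Jensen (≤)
  have hjen0 : (((↑n * b):ℝ)⁻¹ * I) ^ (-(n:ℤ)) ≤ ((↑n * b):ℝ)⁻¹ * ((n:ℝ) * (volume Q).toReal) := by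
    have h := hconv.convexOn.map_average_le hcontOn isClosed_Icc hfs hf_int hgf_int
    rw [average_eq, average_eq, smul_eq_mul, smul_eq_mul, hJint, measureReal_def, hS] at h
    exact h
  have key1 : ((n:ℝ) * b) ^ (n+1) ≤ ((n:ℝ) * (volume Q).toReal) * I ^ n :=
    alg_step1 hSpos hIpos hjen0
  have keyle : ((n:ℝ) * b) ^ (((n:ℝ)+1)/n) ≤ ((n:ℝ) * (volume Q).toReal) ^ ((1:ℝ)/n) * I :=
    alg_step2 hn hSpos hIpos hJpos key1
  constructor
  · rw [hber]
    exact keyle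
  · constructor
    · intro heq
      rw [hber] at heq
      rcases hconv.ae_eq_const_or_map_average_lt hcontOn isClosed_Icc hfs hf_int hgf_int
        with hae | hlt
      · have hae' : f =ᵐ[σm] fun _ => ⨍ v, f v ∂σm := hae
        have hc : ∀ v : sphere (0 : Euc n) 1, f v = ⨍ v, f v ∂σm :=
          fun v => eq_const_of_toSphere_ae_eq hfc hae' v
        set c : ℝ := ⨍ v, f v ∂σm with hcdef
        haveI hnt : Nontrivial (Euc n) := by
          have : 0 < Module.finrank ℝ (Euc n) := by rw [hdim]; omega
          exact Module.nontrivial_of_finrank_pos this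
        obtain ⟨v₀, hv₀⟩ := NormedSpace.sphere_nonempty (x := (0:Euc n)) (r := 1).mpr zero_le_one
        have hcpos : 0 < c := by
          rw [← hc ⟨v₀, hv₀⟩]
          exact hfpos _
        refine ⟨c⁻¹, inv_pos.2 hcpos, ?_⟩
        have hgauge : ∀ x : Euc n, gauge Q x = c * ‖x‖ := by
          intro x
          rcases eq_or_ne x 0 with rfl | hx
          · simp [gauge_zero]
          · have hnx : ‖x‖ ≠ 0 := norm_ne_zero_iff.2 hx
            have hu : ‖x‖⁻¹ • x ∈ sphere (0:Euc n) 1 := by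
              rw [mem_sphere_zero_iff_norm, norm_smul, norm_inv, norm_norm, inv_mul_cancel₀ hnx]
            have h2 : gauge Q (‖x‖⁻¹ • x) = c := hc ⟨_, hu⟩
            calc gauge Q x = gauge Q (‖x‖ • (‖x‖⁻¹ • x)) := by rw [smul_inv_smul₀ hnx]
            _ = ‖x‖ * gauge Q (‖x‖⁻¹ • x) := by
                rw [gauge_smul_of_nonneg (norm_nonneg x), smul_eq_mul]
            _ = c * ‖x‖ := by rw [h2]; ring
        ext x
        rw [mem_Q_iff_gauge_le_one hQcpt hQconv hQ0, hgauge, mem_closedBall_zero_iff,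
          mul_comm, ← le_div_iff₀ hcpos, one_div]
      · exfalso
        have hjs : (((↑n * b):ℝ)⁻¹ * I) ^ (-(n:ℤ))
            < ((↑n * b):ℝ)⁻¹ * ((n:ℝ) * (volume Q).toReal) := by
          have h := hlt
          rw [average_eq, average_eq, smul_eq_mul, smul_eq_mul, hJint, measureReal_def, hS] at h
          exact h
        have key1s := alg_step1_strict hSpos hIpos hjs
        have keyls := alg_step2_strict hn hSpos hIpos hJpos key1s
        rw [heq] at keyls
        exact lt_irrefl _ keyls
    · rintro ⟨r, hr, rfl⟩
      have hbc := ball_case (n := n) hn hr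
      rw [hsupp'] at hbc
      rw [hI, hf]
      exact hbc

end convexbody

end
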